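/- Let n ≥ 2, Σ_1,…,Σ_n ∈ S_+(d), p_1,…,p_n ∈ (0,1) with Σ_i p_i = 1, and let Γ ∈ R^{nd×nd} be symmetric with d×d blocks Γ_{(ij)} such that Γ_{(ii)} = Σ_i for each i, each 2d×2d block matrix [[Γ_{(ii)}, Γ_{(ij)}],[Γ_{(ji)}, Γ_{(jj)}]] is positive semi-definite for i < j, and Σ ≤ A Γ A* with A = (p_1 I_d, …, p_n I_d). Then for every ξ ∈ R^d, ξ*Σξ ≤ (Σ_i p_i √(ξ*Σ_i ξ))². -/

import Mathlib

open MeasureTheory ProbabilityTheory Matrix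

noncomputable def stdGaussianPi (d : ℕ) : Measure (Fin d → ℝ) :=
  Measure.pi fun _ => gaussianReal 0 1

/-- The Gaussian law `N_d(m, S)` on `ℝ^d`, defined as the image of the standard Gaussian
by `z ↦ m + S^{1/2} z`. -/
noncomputable def gaussianPi {d : ℕ} (m : Fin d → ℝ) {S : Matrix (Fin d) (Fin d) ℝ}
    (hS : S.PosSemidef) : Measure (Fin d → ℝ) :=
  Measure.map (fun z => m + ((hS.1.eigenvectorUnitary : Matrix (Fin d) (Fin d) ℝ) *
    diagonal (fun i => Real.sqrt (hS.1.eigenvalues i)) *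
    (star (hS.1.eigenvectorUnitary : Matrix (Fin d) (Fin d) ℝ))).mulVec z) (stdGaussianPi d)

/-- Convex order between measures: `μ ≤_cx ν`. -/
def ConvexOrder {E : Type*} [NormedAddCommGroup E] [NormedSpace ℝ E] [MeasurableSpace E]
    (μ ν : Measure E) : Prop :=
  ∀ φ : E → ℝ, ConvexOn ℝ Set.univ φ → Integrable φ μ → Integrable φ ν →
    ∫ x, φ x ∂μ ≤ ∫ x, φ x ∂ν
theorem stmt8 {n d : ℕ} (hn : 2 ≤ n)
    {S : Matrix (Fin d) (Fin d) ℝ} {Ss : Fin n → Matrix (Fin d) (Fin d) ℝ}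
    (hS : S.PosSemidef) (hSs : ∀ i, (Ss i).PosSemidef)
    (p : Fin n → ℝ) (hp : ∀ i, p i ∈ Set.Ioo (0:ℝ) 1) (hp1 : ∑ i, p i = 1)
    (Γ : Matrix (Fin n × Fin d) (Fin n × Fin d) ℝ) (hΓsymm : Γ.IsSymm)
    (hΓdiag : ∀ i : Fin n, (Matrix.of fun k l => Γ (i, k) (i, l)) = Ss i)
    (hΓblocks : ∀ i j : Fin n, i < j →
      (Matrix.fromBlocks (Matrix.of fun k l => Γ (i, k) (i, l))
        (Matrix.of fun k l => Γ (i, k) (j, l))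
        (Matrix.of fun k l => Γ (j, k) (i, l))
        (Matrix.of fun k l => Γ (j, k) (j, l))).PosSemidef)
    (hdom : ((Matrix.of fun (k : Fin d) (il : Fin n × Fin d) =>
        p il.1 * (if k = il.2 then (1:ℝ) else 0)) * Γ *
        (Matrix.of fun (k : Fin d) (il : Fin n × Fin d) =>
        p il.1 * (if k = il.2 then (1:ℝ) else 0))ᵀ - S).PosSemidef) :
    ∀ ξ : Fin d → ℝ,
      ξ ⬝ᵥ S.mulVec ξ ≤ (∑ i, p i * Real.sqrt (ξ ⬝ᵥ (Ss i).mulVec ξ)) ^ 2 := by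
  intro ξ
  classical
  obtain ⟨q, hq⟩ : ∃ q : Fin n → Fin n → ℝ,
      q = fun i j => ξ ⬝ᵥ (Matrix.of fun k l => Γ (i, k) (j, l)).mulVec ξ := ⟨_, rfl⟩
  have hqii : ∀ i, q i i = ξ ⬝ᵥ (Ss i).mulVec ξ := fun i => by
    simp only [hq]; rw [hΓdiag i]
  have hqnn : ∀ i, 0 ≤ q i i := fun i => by
    rw [hqii i]; simpa using (hSs i).dotProduct_mulVec_nonneg ξ
  have hΓapp : ∀ a b : Fin n × Fin d, Γ a b = Γ b a := fun a b => (hΓsymm.apply b a)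
  have hqsym : ∀ i j, q j i = q i j := by
    intro i j
    simp only [hq, dotProduct, Matrix.mulVec, Matrix.of_apply, Finset.mul_sum]
    rw [Finset.sum_comm]
    exact Finset.sum_congr rfl fun l _ => Finset.sum_congr rfl fun k _ => by
      rw [hΓapp (j, k) (i, l)]; ring
  -- Cauchy-Schwarz for off-diagonal blocks
  have key : ∀ i j, q i j ≤ Real.sqrt (q i i) * Real.sqrt (q j j) := by
    have main : ∀ i j : Fin n, i < j → q i j ≤ Real.sqrt (q i i) * Real.sqrt (q j j) := by
      intro i j hij
      have hb := hΓblocks i j hij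
      have hquad : ∀ t : ℝ, 0 ≤ q j j * (t * t) + (2 * q i j) * t + q i i := by
        intro t
        have h0 := hb.dotProduct_mulVec_nonneg (Sum.elim ξ (t • ξ))
        simp only [star_trivial, Matrix.fromBlocks_mulVec, Sum.elim_comp_inl, Sum.elim_comp_inr,
          sumElim_dotProduct_sumElim, dotProduct_add, Matrix.mulVec_smul,
          dotProduct_smul, smul_dotProduct, smul_eq_mul] at h0
        have h0' : 0 ≤ q i i + t * q i j + (t * q j i + t * (t * q j j)) := by
          simp only [hq]; exact h0
        rw [hqsym i j] at h0'
        nlinarith [h0']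
      have hd := discrim_le_zero hquad
      have h2 : q i j ^ 2 ≤ q i i * q j j := by
        unfold discrim at hd; nlinarith
      calc q i j ≤ |q i j| := le_abs_self _
        _ = Real.sqrt (q i j ^ 2) := (Real.sqrt_sq_eq_abs _).symm
        _ ≤ Real.sqrt (q i i * q j j) := Real.sqrt_le_sqrt h2
        _ = Real.sqrt (q i i) * Real.sqrt (q j j) := Real.sqrt_mul (hqnn i) _
    intro i j
    rcases lt_trichotomy i j with h | h | h
    · exact main i j h
    · subst h
      rw [Real.mul_self_sqrt (hqnn i)]
    · rw [hqsym j i, mul_comm]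
      exact main j i h
  -- the matrix A
  set A : Matrix (Fin d) (Fin n × Fin d) ℝ :=
    Matrix.of fun (k : Fin d) (il : Fin n × Fin d) =>
      p il.1 * (if k = il.2 then (1:ℝ) else 0) with hA
  set v : Fin n × Fin d → ℝ := fun il => p il.1 * ξ il.2 with hv
  have hAv : Aᵀ.mulVec ξ = v := by
    funext il
    simp [hA, hv, Matrix.mulVec, dotProduct, mul_ite, ite_mul, mul_comm]
  have hLHS : ξ ⬝ᵥ (A * Γ * Aᵀ).mulVec ξ = v ⬝ᵥ Γ.mulVec v := by
    rw [← Matrix.mulVec_mulVec, ← Matrix.mulVec_mulVec, Matrix.dotProduct_mulVec,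
      ← Matrix.mulVec_transpose, hAv]
  have hvq : v ⬝ᵥ Γ.mulVec v = ∑ i, ∑ j, p i * p j * q i j := by
    simp only [hq, hv, dotProduct, Matrix.mulVec, Matrix.of_apply,
      Fintype.sum_prod_type, Finset.mul_sum, Finset.sum_mul]
    refine Finset.sum_congr rfl fun i _ => ?_
    rw [Finset.sum_comm]
    exact Finset.sum_congr rfl fun j _ => Finset.sum_congr rfl fun l _ =>
      Finset.sum_congr rfl fun m _ => by ring
  have hdom' := hdom.dotProduct_mulVec_nonneg ξ
  simp only [star_trivial, Matrix.sub_mulVec, dotProduct_sub] at hdom'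
  have hstep : ξ ⬝ᵥ S.mulVec ξ ≤ ∑ i, ∑ j, p i * p j * q i j := by
    rw [← hvq, ← hLHS]; linarith
  have hfinal : ∑ i, ∑ j, p i * p j * q i j ≤ (∑ i, p i * Real.sqrt (q i i)) ^ 2 := by
    rw [sq, Finset.sum_mul_sum]
    refine Finset.sum_le_sum fun i _ => Finset.sum_le_sum fun j _ => ?_
    have hk := key i j
    have hpi := (hp i).1.le
    have hpj := (hp j).1.le
    calc p i * p j * q i j ≤ p i * p j * (Real.sqrt (q i i) * Real.sqrt (q j j)) :=
          mul_le_mul_of_nonneg_left hk (mul_nonneg hpi hpj)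
      _ = p i * Real.sqrt (q i i) * (p j * Real.sqrt (q j j)) := by ring
  simp only [hqii] at hfinal
  exact hstep.trans hfinal
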